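/- Let L be a 3-dimensional antisymmetric ℤ_p-algebra with basis x and associated matrix A ∈ gl_3(ℤ_p), and let M ⊆ L be a 3-dimensional submodule with basis y whose matrix with respect to x is U (so det U ≠ 0). Set B = det(U)·U^{-1}·A·(U^{-1})^T, a matrix over ℚ_p. Then M is a subalgebra of L if and only if all entries of B lie in ℤ_p, and in that case B is the matrix of the bracket of M with respect to y. -/

import Mathlib

open Matrix

theorem stmt4 (p : ℕ) [Fact p.Prime] {L : Type*} [AddCommGroup L] [Module ℤ_[p] L]
    (f : L →ₗ[ℤ_[p]] L →ₗ[ℤ_[p]] L) (hanti : ∀ z : L, f z z = 0)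
    (x : Module.Basis (Fin 3) ℤ_[p] L) (A : Matrix (Fin 3) (Fin 3) ℤ_[p])
    (hA : f (x 1) (x 2) = ∑ i : Fin 3, A i 0 • x i ∧
          f (x 2) (x 0) = ∑ i : Fin 3, A i 1 • x i ∧
          f (x 0) (x 1) = ∑ i : Fin 3, A i 2 • x i)
    (M : Submodule ℤ_[p] L) (y : Module.Basis (Fin 3) ℤ_[p] M)
    (U : Matrix (Fin 3) (Fin 3) ℤ_[p])
    (hU : ∀ j, ((y j : M) : L) = ∑ i : Fin 3, U i j • x i)
    (hdet : U.det ≠ 0)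
    (B : Matrix (Fin 3) (Fin 3) ℚ_[p])
    (hB : B = ((U.det : ℚ_[p])) •
        ((U.map ((↑) : ℤ_[p] → ℚ_[p]))⁻¹ * A.map ((↑) : ℤ_[p] → ℚ_[p]) *
          ((U.map ((↑) : ℤ_[p] → ℚ_[p]))⁻¹).transpose)) :
    ((∀ a ∈ M, ∀ c ∈ M, f a c ∈ M) ↔ ∀ i j, ∃ c : ℤ_[p], (c : ℚ_[p]) = B i j) ∧
    (∀ B' : Matrix (Fin 3) (Fin 3) ℤ_[p], B'.map ((↑) : ℤ_[p] → ℚ_[p]) = B →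
      (f (y 1) (y 2) = ∑ i : Fin 3, B' i 0 • ((y i : M) : L) ∧
       f (y 2) (y 0) = ∑ i : Fin 3, B' i 1 • ((y i : M) : L) ∧
       f (y 0) (y 1) = ∑ i : Fin 3, B' i 2 • ((y i : M) : L))) := by
  classical
  obtain ⟨h12, h20, h01⟩ := hA
  -- skew-symmetry
  have fskew : ∀ a b : L, f b a = -f a b := by
    intro a b
    have h := hanti (a + b)
    simp only [map_add, LinearMap.add_apply, hanti, zero_add, add_zero] at h
    exact eq_neg_of_add_eq_zero_left h
  have h21 : f (x 2) (x 1) = -(∑ i : Fin 3, A i 0 • x i) := by rw [fskew (x 1) (x 2), h12]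
  have h02 : f (x 0) (x 2) = -(∑ i : Fin 3, A i 1 • x i) := by rw [fskew (x 2) (x 0), h20]
  have h10 : f (x 1) (x 0) = -(∑ i : Fin 3, A i 2 • x i) := by rw [fskew (x 0) (x 1), h01]
  -- bilinear expansion
  have hxL : ∀ b c : Fin 3, f ((y b : M) : L) ((y c : M) : L)
      = ∑ j : Fin 3, ∑ k : Fin 3, (U j b * U k c) • f (x j) (x k) := by
    intro b c
    rw [hU b, hU c]
    simp only [map_sum, LinearMap.sum_apply, LinearMap.map_smul₂, LinearMap.smul_apply,
      _root_.map_smul, smul_smul]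
    simp only [Finset.smul_sum, smul_smul]
    rw [Finset.sum_comm]
    exact Finset.sum_congr rfl fun j _ => Finset.sum_congr rfl fun k _ => by rw [mul_comm]
  -- the key computation: bracket matrix in terms of the adjugate
  have key12 : f ((y 1 : M) : L) ((y 2 : M) : L)
      = ∑ i : Fin 3, (A * U.adjugateᵀ) i 0 • x i := by
    rw [hxL 1 2]
    simp only [Fin.sum_univ_three, hanti, h12, h20, h01, h21, h02, h10, smul_zero,
      Matrix.mul_apply, Matrix.transpose_apply, Matrix.adjugate_fin_three, Matrix.cons_val',
      Matrix.cons_val_zero, Matrix.cons_val_one, Matrix.cons_val_two, Matrix.head_cons,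
      Matrix.tail_cons, Matrix.empty_val', Matrix.cons_val_fin_one, Matrix.head_fin_const,
      Matrix.of_apply]
    module
  have key20 : f ((y 2 : M) : L) ((y 0 : M) : L)
      = ∑ i : Fin 3, (A * U.adjugateᵀ) i 1 • x i := by
    rw [hxL 2 0]
    simp only [Fin.sum_univ_three, hanti, h12, h20, h01, h21, h02, h10, smul_zero,
      Matrix.mul_apply, Matrix.transpose_apply, Matrix.adjugate_fin_three, Matrix.cons_val',
      Matrix.cons_val_zero, Matrix.cons_val_one, Matrix.cons_val_two, Matrix.head_cons,
      Matrix.tail_cons, Matrix.empty_val', Matrix.cons_val_fin_one, Matrix.head_fin_const,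
      Matrix.of_apply]
    module
  have key01 : f ((y 0 : M) : L) ((y 1 : M) : L)
      = ∑ i : Fin 3, (A * U.adjugateᵀ) i 2 • x i := by
    rw [hxL 0 1]
    simp only [Fin.sum_univ_three, hanti, h12, h20, h01, h21, h02, h10, smul_zero,
      Matrix.mul_apply, Matrix.transpose_apply, Matrix.adjugate_fin_three, Matrix.cons_val',
      Matrix.cons_val_zero, Matrix.cons_val_one, Matrix.cons_val_two, Matrix.head_cons,
      Matrix.tail_cons, Matrix.empty_val', Matrix.cons_val_fin_one, Matrix.head_fin_const,
      Matrix.of_apply]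
    module
  -- comparing coordinates w.r.t. x
  have coordinj : ∀ c d : Fin 3 → ℤ_[p],
      (∑ i : Fin 3, c i • x i) = (∑ i : Fin 3, d i • x i) → c = d := by
    intro c d h
    have h1 := x.repr_sum_self c
    have h2 := x.repr_sum_self d
    rw [h] at h1
    exact h1.symm.trans h2
  -- matrix equality from ℚ_p entries
  have mapinj : ∀ C D : Matrix (Fin 3) (Fin 3) ℤ_[p],
      C.map ((↑) : ℤ_[p] → ℚ_[p]) = D.map ((↑) : ℤ_[p] → ℚ_[p]) → C = D := by
    intro C D h
    ext i j
    have h2 : (C.map ((↑) : ℤ_[p] → ℚ_[p])) i j = (D.map ((↑) : ℤ_[p] → ℚ_[p])) i j := by rw [h]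
    exact PadicInt.ext h2
  -- determinant over ℚ_p
  have hdQ : (U.map ((↑) : ℤ_[p] → ℚ_[p])).det = (U.det : ℚ_[p]) := by
    rw [show (U.map ((↑) : ℤ_[p] → ℚ_[p])) = U.map ⇑(PadicInt.Coe.ringHom) from rfl,
      ← RingHom.mapMatrix_apply, ← RingHom.map_det]
    rfl
  have hunit : IsUnit (U.map ((↑) : ℤ_[p] → ℚ_[p])).det := by
    rw [hdQ, isUnit_iff_ne_zero]
    exact PadicInt.coe_ne_zero.mpr hdet
  -- C.map = U.map * B
  have hCmap : (A * U.adjugateᵀ).map ((↑) : ℤ_[p] → ℚ_[p])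
      = U.map ((↑) : ℤ_[p] → ℚ_[p]) * B := by
    have hadj : ((U.det : ℚ_[p])) • (U.map ((↑) : ℤ_[p] → ℚ_[p]))⁻¹
        = (U.map ((↑) : ℤ_[p] → ℚ_[p])).adjugate := by
      rw [Matrix.inv_def, smul_smul, hdQ,
        Ring.mul_inverse_cancel _ (by rwa [hdQ] at hunit), one_smul]
    calc (A * U.adjugateᵀ).map ((↑) : ℤ_[p] → ℚ_[p])
        = A.map ((↑) : ℤ_[p] → ℚ_[p]) * (U.adjugateᵀ).map ((↑) : ℤ_[p] → ℚ_[p]) :=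
          Matrix.map_mul (f := PadicInt.Coe.ringHom)
      _ = A.map ((↑) : ℤ_[p] → ℚ_[p]) * ((U.adjugate).map ((↑) : ℤ_[p] → ℚ_[p]))ᵀ := by
          rfl
      _ = A.map ((↑) : ℤ_[p] → ℚ_[p]) * ((U.map ((↑) : ℤ_[p] → ℚ_[p])).adjugate)ᵀ := by
          rw [show (U.adjugate).map ((↑) : ℤ_[p] → ℚ_[p])
              = (U.map ((↑) : ℤ_[p] → ℚ_[p])).adjugate from PadicInt.Coe.ringHom.map_adjugate U]
      _ = A.map ((↑) : ℤ_[p] → ℚ_[p]) * (((U.det : ℚ_[p])) • (U.map ((↑) : ℤ_[p] → ℚ_[p]))⁻¹)ᵀ := by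
          rw [hadj]
      _ = ((U.det : ℚ_[p])) • (A.map ((↑) : ℤ_[p] → ℚ_[p]) * ((U.map ((↑) : ℤ_[p] → ℚ_[p]))⁻¹)ᵀ) := by
          rw [Matrix.transpose_smul, Matrix.mul_smul]
      _ = U.map ((↑) : ℤ_[p] → ℚ_[p]) * B := by
          rw [hB, Matrix.mul_smul, ← Matrix.mul_assoc, ← Matrix.mul_assoc,
            Matrix.mul_nonsing_inv _ hunit, Matrix.one_mul]
  -- Part 2
  have part2 : ∀ B' : Matrix (Fin 3) (Fin 3) ℤ_[p], B'.map ((↑) : ℤ_[p] → ℚ_[p]) = B →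
      (f ((y 1 : M) : L) ((y 2 : M) : L) = ∑ i : Fin 3, B' i 0 • ((y i : M) : L) ∧
       f ((y 2 : M) : L) ((y 0 : M) : L) = ∑ i : Fin 3, B' i 1 • ((y i : M) : L) ∧
       f ((y 0 : M) : L) ((y 1 : M) : L) = ∑ i : Fin 3, B' i 2 • ((y i : M) : L)) := by
    intro B' hB'
    have hUB : U * B' = A * U.adjugateᵀ := by
      apply mapinj
      rw [show (U * B').map ((↑) : ℤ_[p] → ℚ_[p])
          = U.map ((↑) : ℤ_[p] → ℚ_[p]) * B'.map ((↑) : ℤ_[p] → ℚ_[p]) from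
          Matrix.map_mul (f := PadicInt.Coe.ringHom), hB', hCmap]
    have expand : ∀ m : Fin 3, (∑ i : Fin 3, (A * U.adjugateᵀ) i m • x i)
        = ∑ a : Fin 3, B' a m • ((y a : M) : L) := by
      intro m
      rw [← hUB]
      simp only [hU, Matrix.mul_apply, Fin.sum_univ_three]
      module
    exact ⟨key12.trans (expand 0), key20.trans (expand 1), key01.trans (expand 2)⟩
  constructor
  · constructor
    · -- forward: subalgebra → integral entries
      intro hsub
      have m12 : f ((y 1 : M) : L) ((y 2 : M) : L) ∈ M := hsub _ (y 1).2 _ (y 2).2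
      have m20 : f ((y 2 : M) : L) ((y 0 : M) : L) ∈ M := hsub _ (y 2).2 _ (y 0).2
      have m01 : f ((y 0 : M) : L) ((y 1 : M) : L) ∈ M := hsub _ (y 0).2 _ (y 1).2
      have hrep : ∀ z : M, ((z : M) : L) = ∑ a : Fin 3, y.repr z a • ((y a : M) : L) := by
        intro z
        have h := congrArg (M.subtype) (y.sum_repr z)
        simp only [map_sum, map_smul, Submodule.subtype_apply] at h
        exact h.symm
      set r0 : Fin 3 → ℤ_[p] := fun a => y.repr ⟨_, m12⟩ a with hr0
      set r1 : Fin 3 → ℤ_[p] := fun a => y.repr ⟨_, m20⟩ a with hr1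
      set r2 : Fin 3 → ℤ_[p] := fun a => y.repr ⟨_, m01⟩ a with hr2
      set B' : Matrix (Fin 3) (Fin 3) ℤ_[p] := Matrix.of fun a m => ![r0 a, r1 a, r2 a] m
        with hB'def
      have hB'0 : ∀ a, B' a 0 = r0 a := fun a => rfl
      have hB'1 : ∀ a, B' a 1 = r1 a := fun a => rfl
      have hB'2 : ∀ a, B' a 2 = r2 a := fun a => rfl
      have e0 : (∑ i : Fin 3, (A * U.adjugateᵀ) i 0 • x i)
          = ∑ i : Fin 3, (U * B') i 0 • x i := by
        rw [← key12, show f ((y 1 : M) : L) ((y 2 : M) : L)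
            = ∑ a : Fin 3, r0 a • ((y a : M) : L) from hrep ⟨_, m12⟩]
        simp only [hU, Matrix.mul_apply, Fin.sum_univ_three, hB'0, hB'1, hB'2]
        module
      have e1 : (∑ i : Fin 3, (A * U.adjugateᵀ) i 1 • x i)
          = ∑ i : Fin 3, (U * B') i 1 • x i := by
        rw [← key20, show f ((y 2 : M) : L) ((y 0 : M) : L)
            = ∑ a : Fin 3, r1 a • ((y a : M) : L) from hrep ⟨_, m20⟩]
        simp only [hU, Matrix.mul_apply, Fin.sum_univ_three, hB'0, hB'1, hB'2]
        module
      have e2 : (∑ i : Fin 3, (A * U.adjugateᵀ) i 2 • x i)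
          = ∑ i : Fin 3, (U * B') i 2 • x i := by
        rw [← key01, show f ((y 0 : M) : L) ((y 1 : M) : L)
            = ∑ a : Fin 3, r2 a • ((y a : M) : L) from hrep ⟨_, m01⟩]
        simp only [hU, Matrix.mul_apply, Fin.sum_univ_three, hB'0, hB'1, hB'2]
        module
      have hcol0 := coordinj _ _ e0
      have hcol1 := coordinj _ _ e1
      have hcol2 := coordinj _ _ e2
      have hC : A * U.adjugateᵀ = U * B' := by
        ext i m
        fin_cases m
        · exact congrFun hcol0 i
        · exact congrFun hcol1 i
        · exact congrFun hcol2 i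
      have hBeq : B'.map ((↑) : ℤ_[p] → ℚ_[p]) = B := by
        have h1 : U.map ((↑) : ℤ_[p] → ℚ_[p]) * B'.map ((↑) : ℤ_[p] → ℚ_[p])
            = U.map ((↑) : ℤ_[p] → ℚ_[p]) * B := by
          rw [show U.map ((↑) : ℤ_[p] → ℚ_[p]) * B'.map ((↑) : ℤ_[p] → ℚ_[p])
              = (U * B').map ((↑) : ℤ_[p] → ℚ_[p]) from
              (Matrix.map_mul (f := PadicInt.Coe.ringHom)).symm, ← hC, hCmap]
        have h2 := congrArg (fun X => (U.map ((↑) : ℤ_[p] → ℚ_[p]))⁻¹ * X) h1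
        simpa [← Matrix.mul_assoc, Matrix.nonsing_inv_mul _ hunit] using h2
      intro i j
      exact ⟨B' i j, by rw [← hBeq]; rfl⟩
    · -- backward: integral entries → subalgebra
      intro hint
      set B' : Matrix (Fin 3) (Fin 3) ℤ_[p] := fun i j => (hint i j).choose with hB'def
      have hB' : B'.map ((↑) : ℤ_[p] → ℚ_[p]) = B := by
        ext i j
        exact (hint i j).choose_spec
      obtain ⟨e12, e20, e01⟩ := part2 B' hB'
      have hsum : ∀ m : Fin 3, (∑ a : Fin 3, B' a m • ((y a : M) : L)) ∈ M := by
        intro m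
        exact Submodule.sum_mem M fun a _ => Submodule.smul_mem M _ (y a).2
      have hmemy : ∀ i j : Fin 3, f ((y i : M) : L) ((y j : M) : L) ∈ M := by
        intro i j
        fin_cases i <;> fin_cases j <;>
          simp only [Fin.zero_eta, Fin.mk_one, Fin.reduceFinMk, Fin.isValue] <;>
          first
          | (rw [hanti]; exact M.zero_mem)
          | (rw [e12]; exact hsum 0)
          | (rw [e20]; exact hsum 1)
          | (rw [e01]; exact hsum 2)
          | (rw [fskew, e12]; exact M.neg_mem (hsum 0))
          | (rw [fskew, e20]; exact M.neg_mem (hsum 1))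
          | (rw [fskew, e01]; exact M.neg_mem (hsum 2))
      have hMspan : M = Submodule.span ℤ_[p] (Set.range fun i => ((y i : M) : L)) := by
        rw [show (Set.range fun i => ((y i : M) : L)) = M.subtype '' Set.range y by
          rw [← Set.range_comp]; rfl, ← Submodule.map_span, y.span_eq,
          Submodule.map_subtype_top]
      intro a ha c hc
      have step1 : ∀ i : Fin 3, ∀ z ∈ M, f ((y i : M) : L) z ∈ M := by
        intro i z hz
        have hle : M ≤ M.comap (f ((y i : M) : L)) := by
          nth_rewrite 1 [hMspan]
          rw [Submodule.span_le]
          rintro _ ⟨j, rfl⟩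
          exact hmemy i j
        exact hle hz
      have step2 : M ≤ M.comap (f.flip c) := by
        nth_rewrite 1 [hMspan]
        rw [Submodule.span_le]
        rintro _ ⟨i, rfl⟩
        exact step1 i c hc
      exact step2 ha
  · exact part2
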